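/- Generalized Taylor expansion of the generalized hypergeometric function (Section 4, Example 3): Let p ≤ q be natural numbers, let a_1, …, a_p be real numbers and b_1, …, b_q be positive real numbers, let β > 0, m ∈ ℕ and z > 0. Then there exists ξ ∈ (0,z) such that ₚF_q(a_1,…,a_p; b_1,…,b_q; z^β) = Σ_{j=0}^{m} ((a_1)_j⋯(a_p)_j / ((b_1)_j⋯(b_q)_j · j!)) · z^{βj} + ((a_1)_{m+1}⋯(a_p)_{m+1} / ((b_1)_{m+1}⋯(b_q)_{m+1} · (m+1)!)) · z^{β(m+1)} · ₚF_q(a_1+m+1,…,a_p+m+1; b_1+m+1,…,b_q+m+1; ξ^β). -/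

import Mathlib

/-- The Pochhammer symbol `(ν)_k = ν (ν+1) ⋯ (ν+k-1)`, with `(ν)_0 = 1`. -/
noncomputable def poch (ν : ℝ) (k : ℕ) : ℝ := ∏ i ∈ Finset.range k, (ν + (i : ℝ))

/-- The generalized hypergeometric function
`ₚF_q(a₁,…,a_p; b₁,…,b_q; z) = Σ_{k=0}^∞ ((a₁)_k ⋯ (a_p)_k / ((b₁)_k ⋯ (b_q)_k)) z^k / k!`. -/
noncomputable def hypergeom {p q : ℕ} (A : Fin p → ℝ) (B : Fin q → ℝ) (z : ℝ) : ℝ :=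
  ∑' k : ℕ, (∏ i, poch (A i) k) / ((∏ i, poch (B i) k) * (k.factorial : ℝ)) * z ^ k

lemma poch_zero (ν : ℝ) : poch ν 0 = 1 := by simp [poch]

lemma poch_succ (ν : ℝ) (k : ℕ) : poch ν (k + 1) = poch ν k * (ν + k) := by
  simp [poch, Finset.prod_range_succ]

lemma poch_add (ν : ℝ) (n k : ℕ) : poch ν (n + k) = poch ν n * poch (ν + n) k := by
  simp only [poch, Finset.prod_range_add]
  congr 1
  refine Finset.prod_congr rfl fun i _ => ?_
  push_cast; ring

lemma poch_one (ν : ℝ) : poch ν 1 = ν := by simp [poch]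

lemma poch_succ' (ν : ℝ) (k : ℕ) : poch ν (1 + k) = ν * poch (ν + 1) k := by
  rw [poch_add, poch_one]; norm_num

lemma poch_pos {ν : ℝ} (hν : 0 < ν) (k : ℕ) : 0 < poch ν k := by
  refine Finset.prod_pos fun i _ => by positivity

noncomputable def hcoef {p q : ℕ} (A : Fin p → ℝ) (B : Fin q → ℝ) (k : ℕ) : ℝ :=
  (∏ i, poch (A i) k) / ((∏ i, poch (B i) k) * (k.factorial : ℝ))

lemma hypergeom_eq {p q : ℕ} (A : Fin p → ℝ) (B : Fin q → ℝ) (z : ℝ) :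
    hypergeom A B z = ∑' k : ℕ, hcoef A B k * z ^ k := rfl

lemma prod_poch_pos {q : ℕ} {B : Fin q → ℝ} (hB : ∀ i, 0 < B i) (k : ℕ) :
    0 < ∏ i, poch (B i) k :=
  Finset.prod_pos fun i _ => poch_pos (hB i) k

lemma hcoef_zero {p q : ℕ} (A : Fin p → ℝ) (B : Fin q → ℝ) : hcoef A B 0 = 1 := by
  simp [hcoef, poch_zero]

lemma hcoef_succ {p q : ℕ} (A : Fin p → ℝ) (B : Fin q → ℝ) (hB : ∀ i, 0 < B i) (k : ℕ) :
    hcoef A B (k + 1) = hcoef A B k * ((∏ i, (A i + k)) / ((∏ i, (B i + k)) * (k + 1))) := by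
  have hBk := prod_poch_pos hB k
  have hBk' : (0:ℝ) < ∏ i, (B i + k) := Finset.prod_pos fun i _ => by have := hB i; positivity
  have hf : (0:ℝ) < (k.factorial : ℝ) := by exact_mod_cast k.factorial_pos
  simp only [hcoef, poch_succ, Finset.prod_mul_distrib, Nat.factorial_succ]
  push_cast
  rw [div_mul_div_comm, div_eq_div_iff (by positivity) (by positivity)]
  ring

lemma hcoef_shift {p q : ℕ} (A : Fin p → ℝ) (B : Fin q → ℝ) (hB : ∀ i, 0 < B i) (k : ℕ) :
    ((k:ℝ) + 1) * hcoef A B (k + 1)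
      = ((∏ i, A i) / (∏ i, B i)) *
        hcoef (fun i => A i + 1) (fun i => B i + 1) k := by
  have hBk : (0:ℝ) < ∏ i, poch (B i + 1) k := prod_poch_pos (fun i => by have := hB i; positivity) k
  have hB0 : (0:ℝ) < ∏ i, B i := Finset.prod_pos fun i _ => hB i
  have hf : (0:ℝ) < (k.factorial : ℝ) := by exact_mod_cast k.factorial_pos
  have h1 : ∀ ν : ℝ, poch ν (k+1) = ν * poch (ν+1) k := by
    intro ν; rw [add_comm k 1] at *; rw [poch_succ' ν k]
  simp only [hcoef, h1, Finset.prod_mul_distrib, Nat.factorial_succ]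
  push_cast
  field_simp

lemma summable_hyp_aux {p q : ℕ} (hpq : p ≤ q) (A : Fin p → ℝ) (B : Fin q → ℝ)
    (hB : ∀ i, 0 < B i) {R : ℝ} (hR : 0 ≤ R) :
    Summable (fun k => |hcoef A B k| * ((k:ℝ) + 1) * R ^ k) := by
  apply summable_of_ratio_norm_eventually_le (r := 1/2) (by norm_num)
  obtain ⟨N, hN⟩ := exists_nat_ge ((∑ i, |A i|) + 2 ^ (p + 1) * R + 1)
  filter_upwards [Filter.eventually_ge_atTop N] with k hk
  set K : ℝ := (k : ℝ) with hK
  have hNK : ((N:ℝ)) ≤ K := by rw [hK]; exact_mod_cast hk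
  have hsum_nonneg : (0:ℝ) ≤ ∑ i, |A i| := Finset.sum_nonneg fun i _ => abs_nonneg _
  have hpR : (0:ℝ) ≤ 2 ^ (p+1) * R := by positivity
  have hk1 : (1:ℝ) ≤ K := by linarith
  have hK0 : (0:ℝ) ≤ K := by linarith
  have hAi : ∀ i, |A i| ≤ K := by
    intro i
    have : |A i| ≤ ∑ j, |A j| := Finset.single_le_sum (fun j _ => abs_nonneg (A j)) (Finset.mem_univ i)
    linarith
  have hRk : 2 ^ (p+1) * R ≤ K := by linarith
  have h1 : (∏ i, |A i + K|) ≤ 2 ^ p * K ^ p := by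
    calc (∏ i, |A i + K|) ≤ ∏ _i : Fin p, (2 * K) := by
          refine Finset.prod_le_prod (fun i _ => abs_nonneg _) fun i _ => ?_
          calc |A i + K| ≤ |A i| + |K| := abs_add_le _ _
            _ ≤ K + K := by rw [abs_of_nonneg hK0]; linarith [hAi i]
            _ = 2 * K := by ring
      _ = 2 ^ p * K ^ p := by
          rw [Finset.prod_const, Finset.card_univ, Fintype.card_fin, mul_pow]
  have h2 : K ^ p ≤ ∏ i, (B i + K) := by
    calc K ^ p ≤ K ^ q := pow_le_pow_right₀ hk1 hpq
      _ = ∏ _i : Fin q, K := by rw [Finset.prod_const, Finset.card_univ, Fintype.card_fin]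
      _ ≤ ∏ i, (B i + K) := by
          refine Finset.prod_le_prod (fun i _ => hK0) fun i _ => ?_
          linarith [hB i]
  have key : (∏ i, |A i + K|) * ((K + 2) * R) * 2 ≤ (∏ i, (B i + K)) * (K + 1) ^ 2 := by
    have s1 : (∏ i, |A i + K|) * ((K + 2) * R) * 2 ≤ (2 ^ p * K ^ p) * ((K + 2) * R) * 2 := by
      have : (0:ℝ) ≤ (K + 2) * R := by positivity
      nlinarith
    have s2 : (2 ^ p * K ^ p) * ((K + 2) * R) * 2 ≤ K ^ p * (K + 1) ^ 2 := by
      have hKp : (0:ℝ) ≤ K ^ p := by positivity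
      have t1 : 2 ^ (p+1) * R * (K + 2) ≤ K * (K + 2) := by nlinarith
      have t2 : K * (K + 2) ≤ (K + 1) ^ 2 := by nlinarith
      have : (2:ℝ) ^ p * ((K + 2) * R) * 2 = 2 ^ (p+1) * R * (K + 2) := by ring
      nlinarith
    have s3 : K ^ p * (K + 1) ^ 2 ≤ (∏ i, (B i + K)) * (K + 1) ^ 2 :=
      mul_le_mul_of_nonneg_right h2 (sq_nonneg _)
    linarith
  have hDen : (0:ℝ) < (∏ i, (B i + K)) * (K + 1) := by
    have : (0:ℝ) < ∏ i, (B i + K) := Finset.prod_pos fun i _ => by have := hB i; positivity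
    positivity
  have habs : |hcoef A B (k+1)| = |hcoef A B k| * (∏ i, |A i + K|) / ((∏ i, (B i + K)) * (K + 1)) := by
    rw [hcoef_succ A B hB k, abs_mul, abs_div, abs_of_pos hDen, Finset.abs_prod, mul_div_assoc]
  have hnn1 : (0:ℝ) ≤ |hcoef A B (k+1)| * ((((k+1):ℕ):ℝ) + 1) * R ^ (k+1) := by positivity
  have hnn2 : (0:ℝ) ≤ |hcoef A B k| * (K + 1) * R ^ k := by positivity
  rw [Real.norm_of_nonneg hnn1, Real.norm_of_nonneg hnn2]
  push_cast
  rw [habs, pow_succ]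
  rw [div_mul_eq_mul_div, div_mul_eq_mul_div, div_le_iff₀ hDen]
  nlinarith [mul_le_mul_of_nonneg_left key (show (0:ℝ) ≤ |hcoef A B k| * R ^ k by positivity)]

lemma summable_hyp {p q : ℕ} (hpq : p ≤ q) (A : Fin p → ℝ) (B : Fin q → ℝ)
    (hB : ∀ i, 0 < B i) (t : ℝ) : Summable (fun k => hcoef A B k * t ^ k) := by
  have haux := summable_hyp_aux hpq A B hB (abs_nonneg t)
  refine Summable.of_norm (haux.of_nonneg_of_le (fun k => norm_nonneg _) fun k => ?_)
  rw [Real.norm_eq_abs, abs_mul, abs_pow]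
  calc |hcoef A B k| * |t| ^ k = |hcoef A B k| * 1 * |t| ^ k := by ring
    _ ≤ |hcoef A B k| * ((k:ℝ) + 1) * |t| ^ k := by
        have h1 : (1:ℝ) ≤ (k:ℝ) + 1 := by have := Nat.cast_nonneg (α := ℝ) k; linarith
        exact mul_le_mul_of_nonneg_right (mul_le_mul_of_nonneg_left h1 (abs_nonneg _))
          (pow_nonneg (abs_nonneg t) k)

lemma hasDerivAt_hypergeom {p q : ℕ} (hpq : p ≤ q) (A : Fin p → ℝ) (B : Fin q → ℝ)
    (hB : ∀ i, 0 < B i) (t : ℝ) :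
    HasDerivAt (hypergeom A B)
      ((∏ i, A i) / (∏ i, B i) * hypergeom (fun i => A i + 1) (fun i => B i + 1) t) t := by
  set R : ℝ := |t| + 1 with hRdef
  have hR0 : (0:ℝ) ≤ R := by positivity
  have hR1 : (1:ℝ) ≤ R := by rw [hRdef]; linarith [abs_nonneg t]
  have ht : t ∈ Metric.ball (0:ℝ) R := by
    simp [Metric.mem_ball, Real.dist_eq, hRdef]
  have hu := summable_hyp_aux hpq A B hB hR0
  have hbound : ∀ k : ℕ, ∀ y ∈ Metric.ball (0:ℝ) R,
      ‖hcoef A B k * ((k:ℝ) * y ^ (k-1))‖ ≤ |hcoef A B k| * ((k:ℝ) + 1) * R ^ k := by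
    intro k y hy
    have hyR : |y| ≤ R := by
      have := Metric.mem_ball.mp hy
      rw [Real.dist_eq, sub_zero] at this
      linarith
    rw [Real.norm_eq_abs, abs_mul, abs_mul, abs_pow, Nat.abs_cast]
    have h1 : |y| ^ (k-1) ≤ R ^ k := by
      calc |y| ^ (k-1) ≤ R ^ (k-1) := pow_le_pow_left₀ (abs_nonneg y) hyR _
        _ ≤ R ^ k := pow_le_pow_right₀ hR1 (Nat.sub_le k 1)
    have h2 : (k:ℝ) ≤ (k:ℝ) + 1 := by linarith
    have hk0 : (0:ℝ) ≤ (k:ℝ) := Nat.cast_nonneg k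
    calc |hcoef A B k| * ((k:ℝ) * |y| ^ (k-1))
        ≤ |hcoef A B k| * (((k:ℝ) + 1) * R ^ k) := by
          refine mul_le_mul_of_nonneg_left ?_ (abs_nonneg _)
          calc (k:ℝ) * |y| ^ (k-1) ≤ (k:ℝ) * R ^ k :=
                mul_le_mul_of_nonneg_left h1 hk0
            _ ≤ ((k:ℝ) + 1) * R ^ k :=
                mul_le_mul_of_nonneg_right h2 (by positivity)
      _ = |hcoef A B k| * ((k:ℝ) + 1) * R ^ k := by ring
  have hg : ∀ k : ℕ, ∀ y : ℝ, y ∈ Metric.ball (0:ℝ) R →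
      HasDerivAt (fun z : ℝ => hcoef A B k * z ^ k) (hcoef A B k * ((k:ℝ) * y ^ (k-1))) y :=
    fun k y _ => (hasDerivAt_pow k y).const_mul _
  have H := hasDerivAt_tsum_of_isPreconnected hu Metric.isOpen_ball
    (convex_ball (0:ℝ) R).isPreconnected hg hbound ht (summable_hyp hpq A B hB t) ht
  have hsum' : Summable (fun k : ℕ => hcoef A B k * ((k:ℝ) * t ^ (k-1))) := by
    refine Summable.of_norm (hu.of_nonneg_of_le (fun k => norm_nonneg _) fun k => ?_)
    exact hbound k t ht
  have hval : (∑' k : ℕ, hcoef A B k * ((k:ℝ) * t ^ (k-1)))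
      = (∏ i, A i) / (∏ i, B i) * hypergeom (fun i => A i + 1) (fun i => B i + 1) t := by
    rw [hsum'.tsum_eq_zero_add]
    simp only [Nat.cast_zero, zero_mul, mul_zero, zero_add]
    have hterm : ∀ k : ℕ, hcoef A B (k+1) * (((k:ℝ)+1) * t ^ k)
        = (∏ i, A i) / (∏ i, B i) * (hcoef (fun i => A i + 1) (fun i => B i + 1) k * t ^ k) := by
      intro k
      have := hcoef_shift A B hB k
      calc hcoef A B (k+1) * (((k:ℝ)+1) * t ^ k)
          = (((k:ℝ)+1) * hcoef A B (k+1)) * t ^ k := by ring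
        _ = ((∏ i, A i) / (∏ i, B i) * hcoef (fun i => A i + 1) (fun i => B i + 1) k) * t ^ k := by
            rw [this]
        _ = (∏ i, A i) / (∏ i, B i) * (hcoef (fun i => A i + 1) (fun i => B i + 1) k * t ^ k) := by
            ring
    calc (∑' k : ℕ, hcoef A B (k+1) * ((((k+1):ℕ):ℝ) * t ^ ((k+1)-1)))
        = ∑' k : ℕ, (∏ i, A i) / (∏ i, B i) *
            (hcoef (fun i => A i + 1) (fun i => B i + 1) k * t ^ k) := by
          refine tsum_congr fun k => ?_
          simpa using hterm k
      _ = (∏ i, A i) / (∏ i, B i) * hypergeom (fun i => A i + 1) (fun i => B i + 1) t := by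
          rw [tsum_mul_left, hypergeom_eq]
  rw [hypergeom_eq] at * 
  rw [← hval]
  exact H

lemma contDiff_hypergeom (n : ℕ) {p q : ℕ} (hpq : p ≤ q) (A : Fin p → ℝ) (B : Fin q → ℝ)
    (hB : ∀ i, 0 < B i) : ContDiff ℝ n (hypergeom A B) := by
  induction n generalizing A B with
  | zero =>
    rw [show ((0:ℕ) : WithTop ℕ∞) = 0 from rfl, contDiff_zero]
    exact continuous_iff_continuousAt.mpr fun t =>
      ((hasDerivAt_hypergeom hpq A B hB t).differentiableAt).continuousAt
  | succ n ih =>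
    have hd : deriv (hypergeom A B) = fun t => (∏ i, A i) / (∏ i, B i) *
        hypergeom (fun i => A i + 1) (fun i => B i + 1) t :=
      funext fun t => (hasDerivAt_hypergeom hpq A B hB t).deriv
    have hB' : ∀ i, 0 < B i + 1 := fun i => by have := hB i; linarith
    have h1 : ContDiff ℝ n (deriv (hypergeom A B)) := by
      rw [hd]
      exact contDiff_const.mul (ih (fun i => A i + 1) (fun i => B i + 1) hB')
    have h2 : Differentiable ℝ (hypergeom A B) :=
      fun t => (hasDerivAt_hypergeom hpq A B hB t).differentiableAt
    rw [show ((n+1 : ℕ) : WithTop ℕ∞) = (n : WithTop ℕ∞) + 1 by push_cast; rfl,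
      contDiff_succ_iff_deriv]
    exact ⟨h2, by simp, h1⟩

lemma hypergeom_zero {p q : ℕ} (A : Fin p → ℝ) (B : Fin q → ℝ) : hypergeom A B 0 = 1 := by
  rw [hypergeom_eq]
  rw [tsum_eq_single 0 (fun k hk => by
    rw [zero_pow hk, mul_zero])]
  simp [hcoef_zero]

lemma iteratedDeriv_hypergeom (n : ℕ) {p q : ℕ} (hpq : p ≤ q) (A : Fin p → ℝ) (B : Fin q → ℝ)
    (hB : ∀ i, 0 < B i) :
    iteratedDeriv n (hypergeom A B) = fun t =>
      (∏ i, poch (A i) n) / (∏ i, poch (B i) n) *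
        hypergeom (fun i => A i + n) (fun i => B i + n) t := by
  induction n generalizing A B with
  | zero =>
    funext t
    have hA0 : (fun i => A i + ((0:ℕ):ℝ)) = A := by funext i; simp
    have hB0 : (fun i => B i + ((0:ℕ):ℝ)) = B := by funext i; simp
    simp [iteratedDeriv_zero, poch_zero, hA0, hB0]
  | succ n ih =>
    have hB' : ∀ i, 0 < B i + 1 := fun i => by have := hB i; linarith
    have hd : deriv (hypergeom A B) = fun t => (∏ i, A i) / (∏ i, B i) *
        hypergeom (fun i => A i + 1) (fun i => B i + 1) t :=
      funext fun t => (hasDerivAt_hypergeom hpq A B hB t).deriv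
    funext t
    rw [iteratedDeriv_succ', hd]
    have hcd : ContDiff ℝ n (hypergeom (fun i => A i + 1) (fun i => B i + 1)) :=
      contDiff_hypergeom n hpq _ _ hB'
    have hmul : iteratedDeriv n (fun t => (∏ i, A i) / (∏ i, B i) *
        hypergeom (fun i => A i + 1) (fun i => B i + 1) t) t
        = (∏ i, A i) / (∏ i, B i) *
          iteratedDeriv n (hypergeom (fun i => A i + 1) (fun i => B i + 1)) t := by
      rw [← iteratedDerivWithin_univ, ← iteratedDerivWithin_univ]
      exact iteratedDerivWithin_const_mul (Set.mem_univ t) uniqueDiffOn_univ _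
        hcd.contDiffWithinAt
    rw [hmul, ih _ _ hB']
    have harg1 : (fun i => A i + 1 + (n:ℝ)) = (fun i => A i + ((n+1:ℕ):ℝ)) := by
      funext i; push_cast; ring
    have harg2 : (fun i => B i + 1 + (n:ℝ)) = (fun i => B i + ((n+1:ℕ):ℝ)) := by
      funext i; push_cast; ring
    have hpochA : ∀ ν : ℝ, poch ν (n+1) = ν * poch (ν + 1) n := fun ν => by
      rw [add_comm n 1]; exact poch_succ' ν n
    rw [harg1, harg2]
    simp only [hpochA, Finset.prod_mul_distrib]
    rw [← div_mul_div_comm]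
    ring

lemma eqOn_iteratedDerivWithin {f : ℝ → ℝ} (h : ∀ n : ℕ, ContDiff ℝ (n:ℕ) f) {a b : ℝ}
    (hab : a < b) (n : ℕ) :
    Set.EqOn (iteratedDerivWithin n f (Set.Icc a b)) (iteratedDeriv n f) (Set.Icc a b) := by
  have hu : UniqueDiffOn ℝ (Set.Icc a b) := uniqueDiffOn_Icc hab
  induction n with
  | zero => rw [iteratedDerivWithin_zero, iteratedDeriv_zero]; exact Set.eqOn_refl _ _
  | succ n ih =>
    intro y hy
    have hdiff : DifferentiableAt ℝ (iteratedDeriv n f) y := by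
      have := (h (n+1)).differentiable_iteratedDeriv n (by exact_mod_cast Nat.lt_succ_self n)
      exact this y
    rw [iteratedDerivWithin_succ, iteratedDeriv_succ,
      derivWithin_congr ih (ih hy), hdiff.derivWithin (hu y hy)]


/-- Generalized Taylor expansion of the generalized hypergeometric function
(Section 4, Example 3). -/
theorem hypergeom_taylor {p q : ℕ} (hpq : p ≤ q) (A : Fin p → ℝ) (B : Fin q → ℝ)
    (hB : ∀ i, 0 < B i) (β : ℝ) (hβ : 0 < β) (m : ℕ) (z : ℝ) (hz : 0 < z) :
    ∃ ξ ∈ Set.Ioo 0 z,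
      hypergeom A B (z ^ β)
        = (∑ j ∈ Finset.range (m + 1),
            (∏ i, poch (A i) j) / ((∏ i, poch (B i) j) * (j.factorial : ℝ)) *
              z ^ (β * (j : ℝ)))
          + (∏ i, poch (A i) (m + 1)) /
              ((∏ i, poch (B i) (m + 1)) * (((m + 1).factorial : ℕ) : ℝ)) *
              z ^ (β * ((m : ℝ) + 1)) *
              hypergeom (fun i => A i + (m : ℝ) + 1) (fun i => B i + (m : ℝ) + 1) (ξ ^ β) := by
  set f := hypergeom A B with hf
  set x : ℝ := z ^ β with hxdef
  have hx : (0:ℝ) < x := Real.rpow_pos_of_pos hz β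
  have hcd : ∀ n : ℕ, ContDiff ℝ (n:ℕ) f := fun n => contDiff_hypergeom n hpq A B hB
  have hEq := eqOn_iteratedDerivWithin hcd hx
  have hdiff : DifferentiableOn ℝ (iteratedDerivWithin m f (Set.Icc 0 x)) (Set.Ioo 0 x) := by
    intro y hy
    have h1 : DifferentiableAt ℝ (iteratedDeriv m f) y :=
      ((hcd (m+1)).differentiable_iteratedDeriv m (by exact_mod_cast Nat.lt_succ_self m)) y
    exact h1.differentiableWithinAt.congr
      (fun w hw => hEq m (Set.Ioo_subset_Icc_self hw)) (hEq m (Set.Ioo_subset_Icc_self hy))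
  obtain ⟨c, hc, heq⟩ := taylor_mean_remainder_lagrange (n := m) hx.ne
    (by rw [Set.uIcc_of_le hx.le]; exact (hcd m).contDiffOn)
    (by rw [Set.uIcc_of_le hx.le, Set.uIoo_of_le hx.le]; exact hdiff)
  rw [Set.uIcc_of_le hx.le] at heq
  rw [Set.uIoo_of_le hx.le] at hc
  -- value of the Taylor polynomial
  have htay : taylorWithinEval f m (Set.Icc 0 x) 0 x
      = ∑ j ∈ Finset.range (m + 1),
          (∏ i, poch (A i) j) / ((∏ i, poch (B i) j) * (j.factorial : ℝ)) * x ^ j := by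
    rw [taylor_within_apply]
    refine Finset.sum_congr rfl fun j hj => ?_
    have h0 : (0:ℝ) ∈ Set.Icc (0:ℝ) x := Set.left_mem_Icc.mpr hx.le
    rw [hEq j h0]
    simp only [hf, iteratedDeriv_hypergeom j hpq A B hB, hypergeom_zero, mul_one]
    have hBj := prod_poch_pos hB j
    have hfj : (0:ℝ) < (j.factorial : ℝ) := by exact_mod_cast j.factorial_pos
    simp only [smul_eq_mul, sub_zero]
    field_simp
  -- remainder
  have hcIcc : c ∈ Set.Icc 0 x := Set.Ioo_subset_Icc_self hc
  have hrem : iteratedDerivWithin (m + 1) f (Set.Icc 0 x) c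
      = (∏ i, poch (A i) (m+1)) / (∏ i, poch (B i) (m+1)) *
        hypergeom (fun i => A i + (m:ℝ) + 1) (fun i => B i + (m:ℝ) + 1) c := by
    rw [hEq (m+1) hcIcc, iteratedDeriv_hypergeom (m+1) hpq A B hB]
    have hargA : (fun i => A i + ((m+1:ℕ):ℝ)) = (fun i => A i + (m:ℝ) + 1) := by
      funext i; push_cast; ring
    have hargB : (fun i => B i + ((m+1:ℕ):ℝ)) = (fun i => B i + (m:ℝ) + 1) := by
      funext i; push_cast; ring
    rw [hargA, hargB]
  -- choose ξ
  refine ⟨c ^ β⁻¹, ⟨Real.rpow_pos_of_pos hc.1 _, ?_⟩, ?_⟩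
  · have h1 : c ^ β⁻¹ < x ^ β⁻¹ :=
      Real.rpow_lt_rpow hc.1.le hc.2 (inv_pos.mpr hβ)
    have h2 : x ^ β⁻¹ = z := by
      rw [hxdef, ← Real.rpow_mul hz.le, mul_inv_cancel₀ hβ.ne', Real.rpow_one]
    rwa [h2] at h1
  · have hxiβ : (c ^ β⁻¹) ^ β = c := by
      rw [← Real.rpow_mul hc.1.le, inv_mul_cancel₀ hβ.ne', Real.rpow_one]
    have hzpow : ∀ j : ℕ, z ^ (β * (j:ℝ)) = x ^ j := by
      intro j
      rw [Real.rpow_mul hz.le, ← hxdef, Real.rpow_natCast]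
    have hzpow' : z ^ (β * ((m:ℝ) + 1)) = x ^ (m+1) := by
      have : ((m:ℝ) + 1) = ((m+1:ℕ):ℝ) := by push_cast; ring
      rw [this, hzpow (m+1)]
    have hmain : f x = taylorWithinEval f m (Set.Icc 0 x) 0 x
        + iteratedDerivWithin (m + 1) f (Set.Icc 0 x) c * (x - 0) ^ (m + 1) / ((m+1).factorial : ℝ) := by
      have := heq
      linarith [heq]
    rw [hxiβ, hzpow']
    simp only [hzpow]
    rw [← htay]
    rw [hmain, hrem]
    have hBm := prod_poch_pos hB (m+1)
    have hfm : (0:ℝ) < ((m+1).factorial : ℝ) := by exact_mod_cast (m+1).factorial_pos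
    rw [sub_zero]
    field_simp
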